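/- For all integers m ≥ n ≥ 1 and k ≥ 0, the number of semistandard Young tableaux of shape (2^k) with entries in {1,…,m} equals Σ_{0 ≤ a ≤ b ≤ m−n} f_n(2^{k−b},1^{b−a}) · f_{m−n}(2^a,1^{b−a}), where f_r(λ) denotes the number of semistandard Young tableaux of shape λ with entries in {1,…,r}, and by convention f_r(2^i,1^j) = 0 whenever i < 0 or j < 0. -/

import Mathlib

open MvPolynomial

/-- Semistandard Young tableaux of shape `μ` with all entries < `N`
(entries `0,…,N-1` playing the role of `1,…,N`). -/
def BddSsyt (μ : YoungDiagram) (N : ℕ) : Type :=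
  {T : SemistandardYoungTableau μ // ∀ c ∈ μ.cells, T c.1 c.2 < N}

noncomputable instance (μ : YoungDiagram) (N : ℕ) : Fintype (BddSsyt μ N) :=
  Fintype.ofInjective
    (fun (T : BddSsyt μ N) (c : μ.cells) => (⟨T.1 c.1.1 c.1.2, T.2 c.1 c.2⟩ : Fin N))
    (by
      intro T₁ T₂ h
      apply Subtype.ext
      ext i j
      by_cases hij : (i, j) ∈ μ
      · exact congrArg Fin.val (congrFun h ⟨(i, j), (YoungDiagram.mem_cells _).mpr hij⟩)
      · rw [T₁.1.zeros hij, T₂.1.zeros hij])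

/-- The Schur polynomial of a Young diagram `μ` in `N` variables, defined as the
generating function of semistandard Young tableaux of shape `μ` with entries in `{0,…,N-1}`. -/
noncomputable def schurYD (N : ℕ) (μ : YoungDiagram) : MvPolynomial (Fin N) ℤ :=
  ∑ T : BddSsyt μ N, ∏ c ∈ μ.cells.attach,
    X (⟨T.1 c.1.1 c.1.2, T.2 c.1 c.2⟩ : Fin N)

/-- The Young diagram whose rows are the parts of the multiset `m` (in decreasing order). -/
def ydOf (m : Multiset ℕ) : YoungDiagram :=
  YoungDiagram.ofRowLens (m.sort (· ≥ ·)) ((m.pairwise_sort _).sortedGE)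

/-- The Schur polynomial in `N` variables of the partition with parts `m`. -/
noncomputable def schur (N : ℕ) (m : Multiset ℕ) : MvPolynomial (Fin N) ℤ :=
  schurYD N (ydOf m)

/-- The partition `(2^a, 1^b)`. -/
def twoOne (a b : ℕ) : Multiset ℕ :=
  Multiset.replicate a 2 + Multiset.replicate b 1

/-- The Schur polynomial of `(2^a, 1^b)` with integer indices, with the convention
that it is `0` whenever `a < 0` or `b < 0`. -/
noncomputable def schurZ (N : ℕ) (a b : ℤ) : MvPolynomial (Fin N) ℤ :=
  if 0 ≤ a ∧ 0 ≤ b then schur N (twoOne a.toNat b.toNat) else 0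

/-- A family of symmetric polynomials (one for each number `N` of variables) is Schur-positive
if it is a fixed nonnegative integer combination of Schur polynomials, uniformly in `N`. -/
def SchurPos (F : (N : ℕ) → MvPolynomial (Fin N) ℤ) : Prop :=
  ∃ c : Multiset ℕ →₀ ℕ, ∀ N : ℕ, 1 ≤ N →
    F N = ∑ μ ∈ c.support, (c μ) • schur N μ

def SchurNeg (F : (N : ℕ) → MvPolynomial (Fin N) ℤ) : Prop :=
  SchurPos (fun N => -F N)

/-- `μ ∪ 4^a ∪ (3,1)^b ∪ (2,2)^c` as a multiset of parts. -/
def qForm (μ : Multiset ℕ) (t : ℕ × ℕ × ℕ) : Multiset ℕ :=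
  μ + Multiset.replicate t.1 4 + Multiset.replicate t.2.1 3
    + Multiset.replicate t.2.1 1 + Multiset.replicate (2 * t.2.2) 2

/-- The set `Q_μ(M)` of all partitions of `M` of the form `μ ∪ 4^a ∪ (3,1)^b ∪ (2,2)^c`. -/
def Qset (μ : Multiset ℕ) (M : ℕ) : Finset (Multiset ℕ) :=
  Finset.image (qForm μ)
    ((Finset.range (M + 1) ×ˢ Finset.range (M + 1) ×ˢ Finset.range (M + 1)).filter
      (fun t => (qForm μ t).sum = M))

/-- `f_r(λ)`: the number of semistandard Young tableaux of shape `λ` with entries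
in a set of `r` values. -/
noncomputable def numSSYT (r : ℕ) (m : Multiset ℕ) : ℕ :=
  Fintype.card (BddSsyt (ydOf m) r)

lemma sort_twoOne (i j : ℕ) :
    Multiset.sort (twoOne i j) (· ≥ ·) = List.replicate i 2 ++ List.replicate j 1 := by
  apply fun h1 h2 h3 => List.Perm.eq_of_pairwise' (r := fun a b : ℕ => a ≥ b) h2 h3 h1
  · rw [← Multiset.coe_eq_coe, Multiset.sort_eq]
    simp [twoOne, ← Multiset.coe_replicate]
  · exact Multiset.pairwise_sort _ _
  · rw [List.pairwise_append]
    refine ⟨List.pairwise_replicate.2 (by simp), List.pairwise_replicate.2 (by simp), ?_⟩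
    intro a ha b hb
    simp only [List.mem_replicate] at ha hb
    omega

lemma getElem_rep2rep1 (i j r : ℕ) (h : r < (List.replicate i 2 ++ List.replicate j 1).length) :
    (List.replicate i 2 ++ List.replicate j 1)[r] = if r < i then 2 else 1 := by
  by_cases hr : r < i
  · rw [List.getElem_append_left (by simpa using hr), List.getElem_replicate, if_pos hr]
  · rw [List.getElem_append_right (by simpa using hr), List.getElem_replicate, if_neg hr]

lemma mem_ydOf_twoOne (i j r c : ℕ) :
    (r, c) ∈ ydOf (twoOne i j) ↔ (r < i + j ∧ c < if r < i then 2 else 1) := by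
  rw [ydOf, YoungDiagram.mem_ofRowLens]
  simp only [sort_twoOne]
  constructor
  · rintro ⟨h, hc⟩
    rw [getElem_rep2rep1] at hc
    refine ⟨by simpa using h, hc⟩
  · rintro ⟨h, hc⟩
    have h' : r < (List.replicate i 2 ++ List.replicate j 1).length := by simpa using h
    exact ⟨h', by rw [getElem_rep2rep1]; exact hc⟩


lemma mem_ydOf_twoOne0 (i j r : ℕ) :
    ((r, 0) : ℕ × ℕ) ∈ ydOf (twoOne i j) ↔ r < i + j := by
  rw [mem_ydOf_twoOne]
  constructor
  · exact fun h => h.1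
  · intro h; refine ⟨h, ?_⟩; split <;> omega

lemma mem_ydOf_twoOne1 (i j r : ℕ) :
    ((r, 1) : ℕ × ℕ) ∈ ydOf (twoOne i j) ↔ r < i := by
  rw [mem_ydOf_twoOne]
  constructor
  · rintro ⟨h1, h2⟩; by_contra hr; simp [hr] at h2
  · intro h; exact ⟨by omega, by simp [h]⟩

def ColPair (r p q : ℕ) : Type :=
  {fg : (ℕ → ℕ) × (ℕ → ℕ) //
    (∀ s t, s < t → t < p → fg.1 s < fg.1 t) ∧
    (∀ s t, s < t → t < q → fg.2 s < fg.2 t) ∧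
    (∀ t, t < p → fg.1 t < r) ∧
    (∀ t, t < q → fg.2 t < r) ∧
    (∀ t, t < q → fg.1 t ≤ fg.2 t) ∧
    (∀ t, p ≤ t → fg.1 t = 0) ∧
    (∀ t, q ≤ t → fg.2 t = 0)}


noncomputable instance (r p q : ℕ) : Fintype (ColPair r p q) := by
  apply Fintype.ofInjective
    (fun x : ColPair r p q =>
      ((fun t : Fin p => (⟨x.1.1 t, x.2.2.2.1 t t.2⟩ : Fin r)),
       (fun t : Fin q => (⟨x.1.2 t, x.2.2.2.2.1 t t.2⟩ : Fin r))))
  rintro ⟨x₁, h₁⟩ ⟨x₂, h₂⟩ h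
  simp only [Prod.mk.injEq] at h
  apply Subtype.ext
  refine Prod.ext ?_ ?_
  · funext t
    by_cases ht : t < p
    · exact congrArg Fin.val (congrFun h.1 ⟨t, ht⟩)
    · rw [h₁.2.2.2.2.2.1 t (by omega), h₂.2.2.2.2.2.1 t (by omega)]
  · funext t
    by_cases ht : t < q
    · exact congrArg Fin.val (congrFun h.2 ⟨t, ht⟩)
    · rw [h₁.2.2.2.2.2.2 t (by omega), h₂.2.2.2.2.2.2 t (by omega)]

/-- entry function for the inverse direction -/
def cpEnt (i j : ℕ) (f g : ℕ → ℕ) : ℕ → ℕ → ℕ := fun a b =>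
  if b = 0 ∧ a < i + j then f a else if b = 1 ∧ a < i then g a else 0

noncomputable def ssytEquiv (r i j : ℕ) : BddSsyt (ydOf (twoOne i j)) r ≃ ColPair r (i + j) i where
  toFun T := ⟨(fun t => if t < i + j then T.1 t 0 else 0,
               fun t => if t < i then T.1 t 1 else 0), by
    obtain ⟨T, hT⟩ := T
    refine ⟨?_, ?_, ?_, ?_, ?_, ?_, ?_⟩
    · intro s t hst ht
      show (if s < i + j then T s 0 else 0) < (if t < i + j then T t 0 else 0)
      rw [if_pos (by omega), if_pos ht]
      exact T.col_strict hst ((mem_ydOf_twoOne0 i j t).2 ht)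
    · intro s t hst ht
      show (if s < i then T s 1 else 0) < (if t < i then T t 1 else 0)
      rw [if_pos (by omega), if_pos ht]
      exact T.col_strict hst ((mem_ydOf_twoOne1 i j t).2 ht)
    · intro t ht
      show (if t < i + j then T t 0 else 0) < r
      rw [if_pos ht]
      exact hT (t, 0) ((YoungDiagram.mem_cells _).2 ((mem_ydOf_twoOne0 i j t).2 ht))
    · intro t ht
      show (if t < i then T t 1 else 0) < r
      rw [if_pos ht]
      exact hT (t, 1) ((YoungDiagram.mem_cells _).2 ((mem_ydOf_twoOne1 i j t).2 ht))
    · intro t ht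
      show (if t < i + j then T t 0 else 0) ≤ (if t < i then T t 1 else 0)
      rw [if_pos (by omega : t < i + j), if_pos ht]
      exact T.row_weak (by omega) ((mem_ydOf_twoOne1 i j t).2 ht)
    · intro t ht
      show (if t < i + j then T t 0 else 0) = 0
      rw [if_neg (by omega)]
    · intro t ht
      show (if t < i then T t 1 else 0) = 0
      rw [if_neg (by omega)]⟩
  invFun x := ⟨⟨cpEnt i j x.1.1 x.1.2,
      by
        intro a b1 b2 hb hmem
        obtain ⟨hf, hg, hfr, hgr, hfg, hf0, hg0⟩ := x.2
        rw [mem_ydOf_twoOne] at hmem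
        have hb2 : b2 = 1 ∧ a < i := by
          rcases hmem with ⟨h1, h2⟩
          split at h2 <;> omega
        have hb1 : b1 = 0 := by omega
        show (if b1 = 0 ∧ a < i + j then x.1.1 a else if b1 = 1 ∧ a < i then x.1.2 a else 0)
          ≤ (if b2 = 0 ∧ a < i + j then x.1.1 a else if b2 = 1 ∧ a < i then x.1.2 a else 0)
        rw [if_pos ⟨hb1, by omega⟩, if_neg (by omega), if_pos hb2]
        exact hfg a hb2.2,
      by
        intro a1 a2 b ha hmem
        obtain ⟨hf, hg, hfr, hgr, hfg, hf0, hg0⟩ := x.2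
        rw [mem_ydOf_twoOne] at hmem
        obtain ⟨h1, h2⟩ := hmem
        show (if b = 0 ∧ a1 < i + j then x.1.1 a1 else if b = 1 ∧ a1 < i then x.1.2 a1 else 0)
          < (if b = 0 ∧ a2 < i + j then x.1.1 a2 else if b = 1 ∧ a2 < i then x.1.2 a2 else 0)
        have hb1 : b = 0 ∨ (b = 1 ∧ a2 < i) := by split at h2 <;> omega
        split_ifs <;>
          first
            | omega
            | exact hf a1 a2 ha (by omega)
            | exact hg a1 a2 ha (by omega),
      by
        intro a b hmem
        rw [mem_ydOf_twoOne] at hmem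
        push_neg at hmem
        show (if b = 0 ∧ a < i + j then x.1.1 a else if b = 1 ∧ a < i then x.1.2 a else 0) = 0
        rw [if_neg, if_neg]
        · rintro ⟨hb, ha⟩
          have := hmem (by omega)
          split at this <;> omega
        · rintro ⟨hb, ha⟩
          have := hmem (by omega)
          split at this <;> omega⟩,
      by
        rintro ⟨a, b⟩ hmem
        rw [YoungDiagram.mem_cells, mem_ydOf_twoOne] at hmem
        obtain ⟨hf, hg, hfr, hgr, hfg, hf0, hg0⟩ := x.2
        obtain ⟨h1, h2⟩ := hmem
        show (if b = 0 ∧ a < i + j then x.1.1 a else if b = 1 ∧ a < i then x.1.2 a else 0) < r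
        by_cases hb : b = 0
        · rw [if_pos ⟨hb, h1⟩]; exact hfr a h1
        · have hb1 : b = 1 ∧ a < i := by split at h2 <;> omega
          rw [if_neg (by omega), if_pos hb1]
          exact hgr a hb1.2⟩
  left_inv := by
    rintro ⟨T, hT⟩
    apply Subtype.ext
    ext a b
    show (if b = 0 ∧ a < i + j then (if a < i + j then T a 0 else 0)
      else if b = 1 ∧ a < i then (if a < i then T a 1 else 0) else 0) = T a b
    by_cases hmem : (a, b) ∈ ydOf (twoOne i j)
    · have hm := hmem
      rw [mem_ydOf_twoOne] at hm
      obtain ⟨h1, h2⟩ := hm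
      by_cases hb : b = 0
      · subst hb; rw [if_pos ⟨rfl, h1⟩, if_pos h1]
      · have hb1 : b = 1 ∧ a < i := by split at h2 <;> omega
        obtain ⟨hb1', ha⟩ := hb1
        subst hb1'
        rw [if_neg (by omega), if_pos ⟨rfl, ha⟩, if_pos ha]
    · have hm := hmem
      rw [mem_ydOf_twoOne] at hm
      push_neg at hm
      rw [T.zeros hmem, if_neg, if_neg]
      · rintro ⟨hb, ha⟩
        have := hm (by omega); split at this <;> omega
      · rintro ⟨hb, ha⟩
        have := hm (by omega); split at this <;> omega
  right_inv := by
    rintro ⟨⟨f, g⟩, hf, hg, hfr, hgr, hfg, hf0, hg0⟩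
    apply Subtype.ext
    apply Prod.ext
    · funext t
      show (if t < i + j then
          (if (0:ℕ) = 0 ∧ t < i + j then f t else if (0:ℕ) = 1 ∧ t < i then g t else 0)
        else 0) = f t
      split_ifs <;> first | rfl | omega | exact (hf0 t (by omega)).symm | (exfalso; tauto)
    · funext t
      show (if t < i then
          (if (1:ℕ) = 0 ∧ t < i + j then f t else if (1:ℕ) = 1 ∧ t < i then g t else 0)
        else 0) = g t
      split_ifs <;> first | rfl | omega | exact (hg0 t (by omega)).symm | (exfalso; tauto)

lemma numSSYT_eq_card_colPair (r i j p : ℕ) (hp : p = i + j) :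
    numSSYT r (twoOne i j) = Fintype.card (ColPair r p i) := by
  subst hp
  exact Fintype.card_congr (ssytEquiv r i j)

/-- count of positions `t < k` with `n ≤ f t` -/
def cnt (n k : ℕ) (f : ℕ → ℕ) : ℕ := ((Finset.range k).filter (fun t => n ≤ f t)).card

lemma upclosed_iff (k : ℕ) (P : ℕ → Prop) [DecidablePred P]
    (h : ∀ s t, s ≤ t → t < k → P s → P t) {t : ℕ} (ht : t < k) :
    P t ↔ k - ((Finset.range k).filter P).card ≤ t := by
  set S := (Finset.range k).filter P with hS
  have hsub : S ⊆ Finset.range k := Finset.filter_subset _ _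
  have hck : S.card ≤ k := by
    simpa using Finset.card_le_card hsub
  constructor
  · intro hP
    have h1 : Finset.Ico t k ⊆ S := by
      intro u hu
      rw [Finset.mem_Ico] at hu
      rw [hS, Finset.mem_filter, Finset.mem_range]
      exact ⟨hu.2, h t u hu.1 hu.2 hP⟩
    have := Finset.card_le_card h1
    rw [Nat.card_Ico] at this
    omega
  · intro hle
    by_contra hP
    have h1 : S ⊆ Finset.Ico (t + 1) k := by
      intro u hu
      rw [hS, Finset.mem_filter, Finset.mem_range] at hu
      rw [Finset.mem_Ico]
      refine ⟨?_, hu.1⟩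
      by_contra hut
      exact hP (h u t (by omega) ht hu.2)
    have := Finset.card_le_card h1
    rw [Nat.card_Ico] at this
    omega

lemma cnt_le (n k : ℕ) (f : ℕ → ℕ) : cnt n k f ≤ k := by
  rw [cnt]
  calc ((Finset.range k).filter (fun t => n ≤ f t)).card
      ≤ (Finset.range k).card := Finset.card_le_card (Finset.filter_subset _ _)
    _ = k := Finset.card_range k

/-- for a strictly monotone (on `[0,k)`) function, membership description -/
lemma cnt_iff (n k : ℕ) (f : ℕ → ℕ) (hf : ∀ s t, s < t → t < k → f s < f t)
    {t : ℕ} (ht : t < k) : n ≤ f t ↔ k - cnt n k f ≤ t := by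
  rw [cnt]
  refine upclosed_iff k (fun u => n ≤ f u) ?_ ht
  intro s u hsu huk hP
  rcases Nat.lt_or_ge s u with h | h
  · exact le_trans hP (le_of_lt (hf s u h huk))
  · have : s = u := by omega
    rwa [← this]

lemma cnt_eq_of_Ico (n k c : ℕ) (f : ℕ → ℕ) (hck : c ≤ k)
    (h : ∀ t, t < k → (n ≤ f t ↔ k - c ≤ t)) : cnt n k f = c := by
  rw [cnt]
  have : (Finset.range k).filter (fun t => n ≤ f t) = Finset.Ico (k - c) k := by
    ext u
    rw [Finset.mem_filter, Finset.mem_range, Finset.mem_Ico]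
    constructor
    · rintro ⟨h1, h2⟩
      exact ⟨(h u h1).1 h2, h1⟩
    · rintro ⟨h1, h2⟩
      exact ⟨h2, (h u h2).2 h1⟩
  rw [this, Nat.card_Ico]
  omega

section Fiber

variable (m n k a b : ℕ)

/-- The fiber of two-column pairs with prescribed numbers of large entries. -/
def Fiber : Type :=
  {x : ColPair m k k // cnt n k x.1.1 = a ∧ cnt n k x.1.2 = b}

noncomputable instance : Fintype (Fiber m n k a b) := by
  unfold Fiber; infer_instance

variable {m n k a b}
variable (hn : 1 ≤ n) (hnm : n ≤ m) (hab : a ≤ b) (hbk : b ≤ k) (hbm : b ≤ m - n)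

def fwdFiber (x : Fiber m n k a b) :
    ColPair n (k - a) (k - b) × ColPair (m - n) b a :=
  (⟨(fun t => if t < k - a then x.1.1.1 t else 0,
     fun t => if t < k - b then x.1.1.2 t else 0), by
      obtain ⟨⟨fg, hf, hg, hfm, hgm, hfg, hf0, hg0⟩, hca, hcb⟩ := x
      have haf : ∀ t, t < k → (n ≤ fg.1 t ↔ k - a ≤ t) := by
        intro t ht; rw [← hca]; exact cnt_iff n k fg.1 hf ht
      have hbg : ∀ t, t < k → (n ≤ fg.2 t ↔ k - b ≤ t) := by
        intro t ht; rw [← hcb]; exact cnt_iff n k fg.2 hg ht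
      refine ⟨?_, ?_, ?_, ?_, ?_, ?_, ?_⟩
      · intro s t hst ht
        show (if s < k - a then fg.1 s else 0) < (if t < k - a then fg.1 t else 0)
        rw [if_pos (by omega), if_pos ht]
        exact hf s t hst (by omega)
      · intro s t hst ht
        show (if s < k - b then fg.2 s else 0) < (if t < k - b then fg.2 t else 0)
        rw [if_pos (by omega), if_pos ht]
        exact hg s t hst (by omega)
      · intro t ht
        show (if t < k - a then fg.1 t else 0) < n
        rw [if_pos ht]
        have h1 : ¬ (n ≤ fg.1 t) := fun hc => absurd ((haf t (by omega)).1 hc) (by omega)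
        omega
      · intro t ht
        show (if t < k - b then fg.2 t else 0) < n
        rw [if_pos ht]
        have h1 : ¬ (n ≤ fg.2 t) := fun hc => absurd ((hbg t (by omega)).1 hc) (by omega)
        omega
      · intro t ht
        show (if t < k - a then fg.1 t else 0) ≤ (if t < k - b then fg.2 t else 0)
        rw [if_pos (by omega), if_pos ht]
        exact hfg t (by omega)
      · intro t ht
        show (if t < k - a then fg.1 t else 0) = 0
        rw [if_neg (by omega)]
      · intro t ht
        show (if t < k - b then fg.2 t else 0) = 0
        rw [if_neg (by omega)]⟩,
   ⟨(fun t => if t < b then m - 1 - x.1.1.2 (k - 1 - t) else 0,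
     fun t => if t < a then m - 1 - x.1.1.1 (k - 1 - t) else 0), by
      obtain ⟨⟨fg, hf, hg, hfm, hgm, hfg, hf0, hg0⟩, hca, hcb⟩ := x
      have haf : ∀ t, t < k → (n ≤ fg.1 t ↔ k - a ≤ t) := by
        intro t ht; rw [← hca]; exact cnt_iff n k fg.1 hf ht
      have hbg : ∀ t, t < k → (n ≤ fg.2 t ↔ k - b ≤ t) := by
        intro t ht; rw [← hcb]; exact cnt_iff n k fg.2 hg ht
      have hak : a ≤ k := le_trans hab hbk
      refine ⟨?_, ?_, ?_, ?_, ?_, ?_, ?_⟩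
      · intro s t hst ht
        show (if s < b then m - 1 - fg.2 (k - 1 - s) else 0)
          < (if t < b then m - 1 - fg.2 (k - 1 - t) else 0)
        rw [if_pos (by omega), if_pos ht]
        have h1 : fg.2 (k - 1 - s) < m := hgm _ (by omega)
        have h2 : fg.2 (k - 1 - t) < fg.2 (k - 1 - s) := hg _ _ (by omega) (by omega)
        omega
      · intro s t hst ht
        show (if s < a then m - 1 - fg.1 (k - 1 - s) else 0)
          < (if t < a then m - 1 - fg.1 (k - 1 - t) else 0)
        rw [if_pos (by omega), if_pos ht]
        have h1 : fg.1 (k - 1 - s) < m := hfm _ (by omega)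
        have h2 : fg.1 (k - 1 - t) < fg.1 (k - 1 - s) := hf _ _ (by omega) (by omega)
        omega
      · intro t ht
        show (if t < b then m - 1 - fg.2 (k - 1 - t) else 0) < m - n
        rw [if_pos ht]
        have h1 : n ≤ fg.2 (k - 1 - t) := (hbg _ (by omega)).2 (by omega)
        omega
      · intro t ht
        show (if t < a then m - 1 - fg.1 (k - 1 - t) else 0) < m - n
        rw [if_pos ht]
        have h1 : n ≤ fg.1 (k - 1 - t) := (haf _ (by omega)).2 (by omega)
        omega
      · intro t ht
        show (if t < b then m - 1 - fg.2 (k - 1 - t) else 0)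
          ≤ (if t < a then m - 1 - fg.1 (k - 1 - t) else 0)
        rw [if_pos (by omega), if_pos ht]
        have h1 : fg.1 (k - 1 - t) ≤ fg.2 (k - 1 - t) := hfg _ (by omega)
        omega
      · intro t ht
        show (if t < b then m - 1 - fg.2 (k - 1 - t) else 0) = 0
        rw [if_neg (by omega)]
      · intro t ht
        show (if t < a then m - 1 - fg.1 (k - 1 - t) else 0) = 0
        rw [if_neg (by omega)]⟩)

def bwdFiber (y : ColPair n (k - a) (k - b)) (z : ColPair (m - n) b a) :
    Fiber m n k a b := by
  refine ⟨⟨(fun t => if t < k - a then y.1.1 t else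
              if t < k then n + (m - n - 1 - z.1.2 (k - 1 - t)) else 0,
            fun t => if t < k - b then y.1.2 t else
              if t < k then n + (m - n - 1 - z.1.1 (k - 1 - t)) else 0), ?_⟩, ?_, ?_⟩
  case _ =>
    obtain ⟨⟨yf, yg⟩, hyf, hyg, hyfm, hygm, hyfg, hyf0, hyg0⟩ := y
    obtain ⟨⟨zf, zg⟩, hzf, hzg, hzfm, hzgm, hzfg, hzf0, hzg0⟩ := z
    refine ⟨?_, ?_, ?_, ?_, ?_, ?_, ?_⟩
    · intro s t hst ht
      show (if s < k - a then yf s else if s < k then n + (m - n - 1 - zg (k - 1 - s)) else 0)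
        < (if t < k - a then yf t else if t < k then n + (m - n - 1 - zg (k - 1 - t)) else 0)
      by_cases h1 : t < k - a
      · rw [if_pos (by omega), if_pos h1]
        exact hyf s t hst h1
      · rw [if_neg h1, if_pos ht]
        by_cases h2 : s < k - a
        · rw [if_pos h2]
          have h3 : yf s < n := hyfm s h2
          omega
        · rw [if_neg h2, if_pos (by omega)]
          have h4 : zg (k - 1 - t) < zg (k - 1 - s) := hzg _ _ (by omega) (by omega)
          have h5 : zg (k - 1 - s) < m - n := hzgm _ (by omega)
          omega
    · intro s t hst ht
      show (if s < k - b then yg s else if s < k then n + (m - n - 1 - zf (k - 1 - s)) else 0)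
        < (if t < k - b then yg t else if t < k then n + (m - n - 1 - zf (k - 1 - t)) else 0)
      by_cases h1 : t < k - b
      · rw [if_pos (by omega), if_pos h1]
        exact hyg s t hst h1
      · rw [if_neg h1, if_pos ht]
        by_cases h2 : s < k - b
        · rw [if_pos h2]
          have h3 : yg s < n := hygm s h2
          omega
        · rw [if_neg h2, if_pos (by omega)]
          have h4 : zf (k - 1 - t) < zf (k - 1 - s) := hzf _ _ (by omega) (by omega)
          have h5 : zf (k - 1 - s) < m - n := hzfm _ (by omega)
          omega
    · intro t ht
      show (if t < k - a then yf t else if t < k then n + (m - n - 1 - zg (k - 1 - t)) else 0) < m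
      by_cases h1 : t < k - a
      · rw [if_pos h1]
        have h3 : yf t < n := hyfm t h1
        omega
      · rw [if_neg h1, if_pos ht]
        have h4 : zg (k - 1 - t) < m - n := hzgm _ (by omega)
        omega
    · intro t ht
      show (if t < k - b then yg t else if t < k then n + (m - n - 1 - zf (k - 1 - t)) else 0) < m
      by_cases h1 : t < k - b
      · rw [if_pos h1]
        have h3 : yg t < n := hygm t h1
        omega
      · rw [if_neg h1, if_pos ht]
        have h4 : zf (k - 1 - t) < m - n := hzfm _ (by omega)
        omega
    · intro t ht
      show (if t < k - a then yf t else if t < k then n + (m - n - 1 - zg (k - 1 - t)) else 0)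
        ≤ (if t < k - b then yg t else if t < k then n + (m - n - 1 - zf (k - 1 - t)) else 0)
      by_cases h1 : t < k - b
      · rw [if_pos (by omega), if_pos h1]
        exact hyfg t h1
      · rw [if_neg h1, if_pos ht]
        by_cases h2 : t < k - a
        · rw [if_pos h2, if_pos ht]
          have h3 : yf t < n := hyfm t h2
          omega
        · rw [if_neg h2, if_pos ht]
          have h4 : zf (k - 1 - t) ≤ zg (k - 1 - t) := hzfg _ (by omega)
          have h5 : zf (k - 1 - t) < m - n := hzfm _ (by omega)
          omega
    · intro t ht
      show (if t < k - a then yf t else if t < k then n + (m - n - 1 - zg (k - 1 - t)) else 0) = 0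
      rw [if_neg (by omega), if_neg (by omega)]
    · intro t ht
      show (if t < k - b then yg t else if t < k then n + (m - n - 1 - zf (k - 1 - t)) else 0) = 0
      rw [if_neg (by omega), if_neg (by omega)]
  case _ =>
    obtain ⟨⟨yf, yg⟩, hyf, hyg, hyfm, hygm, hyfg, hyf0, hyg0⟩ := y
    obtain ⟨⟨zf, zg⟩, hzf, hzg, hzfm, hzgm, hzfg, hzf0, hzg0⟩ := z
    refine cnt_eq_of_Ico n k a _ (by omega) ?_
    intro t ht
    show n ≤ (if t < k - a then yf t else if t < k then n + (m - n - 1 - zg (k - 1 - t)) else 0)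
      ↔ k - a ≤ t
    by_cases h1 : t < k - a
    · rw [if_pos h1]
      have h3 : yf t < n := hyfm t h1
      omega
    · rw [if_neg h1, if_pos ht]
      omega
  case _ =>
    obtain ⟨⟨yf, yg⟩, hyf, hyg, hyfm, hygm, hyfg, hyf0, hyg0⟩ := y
    obtain ⟨⟨zf, zg⟩, hzf, hzg, hzfm, hzgm, hzfg, hzf0, hzg0⟩ := z
    refine cnt_eq_of_Ico n k b _ (by omega) ?_
    intro t ht
    show n ≤ (if t < k - b then yg t else if t < k then n + (m - n - 1 - zf (k - 1 - t)) else 0)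
      ↔ k - b ≤ t
    by_cases h1 : t < k - b
    · rw [if_pos h1]
      have h3 : yg t < n := hygm t h1
      omega
    · rw [if_neg h1, if_pos ht]
      omega

noncomputable def fiberEquiv :
    Fiber m n k a b ≃ ColPair n (k - a) (k - b) × ColPair (m - n) b a where
  toFun := fwdFiber hnm hab hbk hbm
  invFun p := bwdFiber hnm hab hbk p.1 p.2
  left_inv := by
    rintro ⟨⟨fg, hf, hg, hfm, hgm, hfg, hf0, hg0⟩, hca, hcb⟩
    have haf : ∀ t, t < k → (n ≤ fg.1 t ↔ k - a ≤ t) := by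
      intro t ht; rw [← hca]; exact cnt_iff n k fg.1 hf ht
    have hbg : ∀ t, t < k → (n ≤ fg.2 t ↔ k - b ≤ t) := by
      intro t ht; rw [← hcb]; exact cnt_iff n k fg.2 hg ht
    apply Subtype.ext
    apply Subtype.ext
    refine Prod.ext ?_ ?_
    · funext t
      show (if t < k - a then (if t < k - a then fg.1 t else 0) else
          if t < k then n + (m - n - 1 -
            (if k - 1 - t < a then m - 1 - fg.1 (k - 1 - (k - 1 - t)) else 0)) else 0) = fg.1 t
      by_cases h1 : t < k - a
      · rw [if_pos h1, if_pos h1]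
      · rw [if_neg h1]
        by_cases h2 : t < k
        · rw [if_pos h2, if_pos (by omega), show k - 1 - (k - 1 - t) = t from by omega]
          have h3 : n ≤ fg.1 t := (haf t h2).2 (by omega)
          have h4 : fg.1 t < m := hfm t h2
          omega
        · rw [if_neg h2]
          exact (hf0 t (by omega)).symm
    · funext t
      show (if t < k - b then (if t < k - b then fg.2 t else 0) else
          if t < k then n + (m - n - 1 -
            (if k - 1 - t < b then m - 1 - fg.2 (k - 1 - (k - 1 - t)) else 0)) else 0) = fg.2 t
      by_cases h1 : t < k - b
      · rw [if_pos h1, if_pos h1]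
      · rw [if_neg h1]
        by_cases h2 : t < k
        · rw [if_pos h2, if_pos (by omega), show k - 1 - (k - 1 - t) = t from by omega]
          have h3 : n ≤ fg.2 t := (hbg t h2).2 (by omega)
          have h4 : fg.2 t < m := hgm t h2
          omega
        · rw [if_neg h2]
          exact (hg0 t (by omega)).symm
  right_inv := by
    rintro ⟨⟨⟨yf, yg⟩, hyf, hyg, hyfm, hygm, hyfg, hyf0, hyg0⟩,
            ⟨⟨zf, zg⟩, hzf, hzg, hzfm, hzgm, hzfg, hzf0, hzg0⟩⟩
    refine Prod.ext ?_ ?_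
    · apply Subtype.ext
      refine Prod.ext ?_ ?_
      · funext t
        show (if t < k - a then
            (if t < k - a then yf t else if t < k then n + (m - n - 1 - zg (k - 1 - t)) else 0)
          else 0) = yf t
        by_cases h1 : t < k - a
        · rw [if_pos h1, if_pos h1]
        · rw [if_neg h1]
          exact (hyf0 t (by omega)).symm
      · funext t
        show (if t < k - b then
            (if t < k - b then yg t else if t < k then n + (m - n - 1 - zf (k - 1 - t)) else 0)
          else 0) = yg t
        by_cases h1 : t < k - b
        · rw [if_pos h1, if_pos h1]
        · rw [if_neg h1]
          exact (hyg0 t (by omega)).symm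
    · apply Subtype.ext
      refine Prod.ext ?_ ?_
      · funext t
        show (if t < b then m - 1 -
            (if k - 1 - t < k - b then yg (k - 1 - t)
              else if k - 1 - t < k then n + (m - n - 1 - zf (k - 1 - (k - 1 - t))) else 0)
          else 0) = zf t
        by_cases h1 : t < b
        · rw [if_pos h1, if_neg (by omega), if_pos (by omega),
            show k - 1 - (k - 1 - t) = t from by omega]
          have h2 : zf t < m - n := hzfm t h1
          omega
        · rw [if_neg h1]
          exact (hzf0 t (by omega)).symm
      · funext t
        show (if t < a then m - 1 -
            (if k - 1 - t < k - a then yf (k - 1 - t)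
              else if k - 1 - t < k then n + (m - n - 1 - zg (k - 1 - (k - 1 - t))) else 0)
          else 0) = zg t
        by_cases h1 : t < a
        · rw [if_pos h1, if_neg (by omega), if_pos (by omega),
            show k - 1 - (k - 1 - t) = t from by omega]
          have h2 : zg t < m - n := hzgm t h1
          omega
        · rw [if_neg h1]
          exact (hzg0 t (by omega)).symm

include hnm hab hbk hbm in
lemma card_fiber :
    Fintype.card (Fiber m n k a b)
      = Fintype.card (ColPair n (k - a) (k - b)) * Fintype.card (ColPair (m - n) b a) := by
  rw [Fintype.card_congr (fiberEquiv hnm hab hbk hbm), Fintype.card_prod]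

end Fiber

lemma cnt_mono (n k : ℕ) (f g : ℕ → ℕ) (h : ∀ t, t < k → f t ≤ g t) :
    cnt n k f ≤ cnt n k g := by
  apply Finset.card_le_card
  intro t ht
  rw [Finset.mem_filter, Finset.mem_range] at ht ⊢
  exact ⟨ht.1, le_trans ht.2 (h t ht.1)⟩

lemma cnt_le_sub (n k m : ℕ) (g : ℕ → ℕ) (hg : ∀ s t, s < t → t < k → g s < g t)
    (hgm : ∀ t, t < k → g t < m) (hnm : n ≤ m) : cnt n k g ≤ m - n := by
  rw [cnt, ← Finset.card_range (m - n)]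
  apply Finset.card_le_card_of_injOn (fun t => g t - n)
  · intro t ht
    rw [Finset.mem_coe, Finset.mem_filter, Finset.mem_range] at ht
    rw [Finset.mem_coe, Finset.mem_range]
    show g t - n < m - n
    have h1 := hgm t ht.1
    have h2 : n ≤ g t := ht.2
    omega
  · intro s hs t ht hst
    simp only [Finset.coe_filter, Set.mem_setOf_eq, Finset.mem_range] at hs ht
    have hst' : g s - n = g t - n := hst
    rcases lt_trichotomy s t with h | h | h
    · have := hg s t h ht.1
      have h2 : n ≤ g s := hs.2
      omega
    · exact h
    · have := hg t s h hs.1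
      have h2 : n ≤ g t := ht.2
      omega

/-- For `m ≥ n ≥ 1` and `k ≥ 0`,
`f_m(2^k) = ∑_{0 ≤ a ≤ b ≤ m-n} f_n(2^{k-b},1^{b-a}) f_{m-n}(2^a,1^{b-a})`,
with `f_r(2^i,1^j) = 0` when `i < 0`. -/
theorem numSSYT_two_cols_convolution (m n k : ℕ) (hn : 1 ≤ n) (hnm : n ≤ m) :
    numSSYT m (Multiset.replicate k 2)
      = ∑ b ∈ Finset.range (m - n + 1), ∑ a ∈ Finset.range (b + 1),
          (if b ≤ k then numSSYT n (twoOne (k - b) (b - a)) else 0)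
            * numSSYT (m - n) (twoOne a (b - a)) := by
  classical
  rw [show Multiset.replicate k 2 = twoOne k 0 from by simp [twoOne],
      numSSYT_eq_card_colPair m k 0 k (by omega)]
  have key := Finset.card_eq_sum_card_fiberwise
      (s := (Finset.univ : Finset (ColPair m k k)))
      (t := (Finset.range (m - n + 1)).sigma (fun b => Finset.range (b + 1)))
      (f := fun x => (⟨cnt n k x.1.2, cnt n k x.1.1⟩ : Σ _ : ℕ, ℕ))
      (by
        intro x _
        obtain ⟨hf, hg, hfm, hgm, hfg, hf0, hg0⟩ := x.2
        refine Finset.mem_sigma.2 ⟨Finset.mem_range.2 ?_, Finset.mem_range.2 ?_⟩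
        · show cnt n k x.1.2 < m - n + 1
          have h1 := cnt_le_sub n k m x.1.2 hg hgm hnm
          omega
        · show cnt n k x.1.1 < cnt n k x.1.2 + 1
          have h2 := cnt_mono n k x.1.1 x.1.2 (fun t ht => hfg t ht)
          omega)
  rw [← Finset.card_univ, key, Finset.sum_sigma]
  apply Finset.sum_congr rfl
  intro b hb
  apply Finset.sum_congr rfl
  intro a ha
  rw [Finset.mem_range] at hb ha
  by_cases hbk : b ≤ k
  · rw [if_pos hbk]
    have hfib : Fintype.card (Fiber m n k a b)
        = (Finset.univ.filter (fun x : ColPair m k k =>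
            (⟨cnt n k x.1.2, cnt n k x.1.1⟩ : Σ _ : ℕ, ℕ) = ⟨b, a⟩)).card := by
      apply Fintype.card_of_subtype
      intro x
      rw [Finset.mem_filter]
      constructor
      · rintro ⟨_, hx⟩
        have h1 : cnt n k x.1.2 = b := congrArg Sigma.fst hx
        have h2 : cnt n k x.1.1 = a := by
          have := congrArg Sigma.snd hx
          simpa using this
        exact ⟨h2, h1⟩
      · rintro ⟨h1, h2⟩
        exact ⟨Finset.mem_univ _, by rw [h1, h2]⟩
    rw [← hfib, card_fiber hnm (by omega) hbk (by omega),
        numSSYT_eq_card_colPair n (k - b) (b - a) (k - a) (by omega),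
        numSSYT_eq_card_colPair (m - n) a (b - a) b (by omega)]
  · rw [if_neg hbk, zero_mul, Finset.card_eq_zero, Finset.filter_eq_empty_iff]
    intro x _
    intro hx
    have h1 : cnt n k x.1.2 = b := congrArg Sigma.fst hx
    have h2 := cnt_le n k x.1.2
    omega
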